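/- arXiv:0809.0533 — 2 statements merged into one kernel-verified Lean document; each statement's English description precedes it below -/
import Mathlib

section
/- Fix R_p, R_I > 0 with R_p ≤ R_I, d ≥ 0, and points a, b ∈ ℝ² with dist(a, b) = d. If r_I ≥ d + 2 R_I, then ∫_{D(a, r_I − R_I) \ D(b, R_I)} S_I(‖x − a‖, R_p, r_I)/(π R_p²) dx = π((r_I − R_I)² − R_I²). -/
open MeasureTheory Metric Real

/-- `SI d r₁ r₂` is the area (two-dimensional Lebesgue measure) of the intersection of
two closed disks in the plane of radii `r₁` and `r₂` whose centers are at distance `d`. -/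
noncomputable def SI (d r₁ r₂ : ℝ) : ℝ :=
  (volume (closedBall (0 : EuclideanSpace ℝ (Fin 2)) r₁ ∩
    closedBall (EuclideanSpace.single (0 : Fin 2) d) r₂)).toReal

lemma volume_closedBall_plane (x : EuclideanSpace ℝ (Fin 2)) (r : ℝ) (hr : 0 ≤ r) :
    volume (closedBall x r) = ENNReal.ofReal (π * r ^ 2) := by
  rw [EuclideanSpace.volume_closedBall]
  simp only [Fintype.card_fin]
  rw [show ((2 : ℕ) : ℝ) / 2 + 1 = 2 by norm_num, Real.Gamma_two,
    Real.sq_sqrt Real.pi_pos.le, div_one, ← ENNReal.ofReal_pow hr, ← ENNReal.ofReal_mul (by positivity)]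
  ring_nf

lemma SI_eq_of_sub (d' r₁ r₂ : ℝ) (hd : 0 ≤ d') (hr : 0 ≤ r₁) (hsub : d' + r₁ ≤ r₂) :
    SI d' r₁ r₂ = π * r₁ ^ 2 := by
  have hsubset : closedBall (0 : EuclideanSpace ℝ (Fin 2)) r₁ ⊆
      closedBall (EuclideanSpace.single (0 : Fin 2) d') r₂ := by
    apply closedBall_subset_closedBall'
    rw [dist_eq_norm, zero_sub, norm_neg, EuclideanSpace.norm_single, Real.norm_of_nonneg hd]
    linarith
  rw [SI, Set.inter_eq_left.mpr hsubset, volume_closedBall_plane _ _ hr,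
    ENNReal.toReal_ofReal (by positivity)]

/-- Key integral identity in the large-power regime of the paper's Theorem 2:
for `r_I ≥ d + 2 R_I` the integral of the normalized lens area over
`D(a, r_I − R_I) \ D(b, R_I)` equals `π((r_I − R_I)² − R_I²)`. -/
theorem integral_So_large_power (R_p R_I d : ℝ)
    (hRp : 0 < R_p) (hRI : 0 < R_I) (hle : R_p ≤ R_I) (hd : 0 ≤ d)
    (a b : EuclideanSpace ℝ (Fin 2)) (hab : dist a b = d)
    (r_I : ℝ) (h : d + 2 * R_I ≤ r_I) :
    (∫ x in closedBall a (r_I - R_I) \ closedBall b R_I,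
        SI ‖x - a‖ R_p r_I / (π * R_p ^ 2))
      = π * ((r_I - R_I) ^ 2 - R_I ^ 2) := by
  have hπ : (0 : ℝ) < π := Real.pi_pos
  have hmem : ∀ x ∈ closedBall a (r_I - R_I) \ closedBall b R_I,
      SI ‖x - a‖ R_p r_I / (π * R_p ^ 2) = 1 := by
    intro x hx
    have hx1 : ‖x - a‖ ≤ r_I - R_I := by
      have := hx.1
      rwa [mem_closedBall, dist_eq_norm] at this
    rw [SI_eq_of_sub _ _ _ (norm_nonneg _) hRp.le (by linarith), div_self (by positivity)]
  rw [setIntegral_congr_fun (measurableSet_closedBall.diff measurableSet_closedBall) hmem]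
  have hsub : closedBall b R_I ⊆ closedBall a (r_I - R_I) := by
    apply closedBall_subset_closedBall'
    rw [dist_comm, hab]; linarith
  rw [setIntegral_const, smul_eq_mul, mul_one, measureReal_def,
    measure_diff hsub measurableSet_closedBall.nullMeasurableSet
      (measure_closedBall_lt_top.ne),
    volume_closedBall_plane _ _ (by linarith), volume_closedBall_plane _ _ hRI.le,
    ← ENNReal.ofReal_sub _ (by positivity), ENNReal.toReal_ofReal (by nlinarith [Real.pi_pos.le, mul_nonneg (show (0:ℝ) ≤ r_I - 2*R_I by linarith) (show (0:ℝ) ≤ r_I by linarith)])]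
  ring
end

section
/- Fix R_I > 0, β ∈ (0, 1), γ ∈ (0, 1), and μ > 0; set R_p = β R_I, and for each r_I > 2 R_I set d = γ r_I and r_D = r_I − R_I. Then P_F(r_I) → 0 and P_MD(r_I) → 0 as r_I → ∞; i.e., the closed-form operating point (P_F, P_D) = (P_F, 1 − P_MD) of listen-before-talk with detection range r_D = r_I − R_I approaches the perfect point (0, 1) as r_I/R_I → ∞. (Paper's Theorem 2, large-power regime, stated for the closed-form expressions of Proposition 2.) -/
open MeasureTheory Metric Real Filter

/-- Closed-form false-alarm probability of listen-before-talk (Proposition 2, eq. (6)):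
`P_F = 1 − exp(−μ(π r_D² − S_I(d, r_D, R_I) − ∫_{S_o(r_D)} g))`, where
`g(x) = S_I(‖x − a‖, R_p, r_I)/(π R_p²)` and `S_o(r_D) = D(a, min(r_D, r_I+R_p)) \ D(b, R_I)`. -/
noncomputable def pF (a b : EuclideanSpace ℝ (Fin 2)) (μ R_p R_I r_I d r_D : ℝ) : ℝ :=
  1 - Real.exp (-μ * (π * r_D ^ 2 - SI d r_D R_I -
    ∫ x in closedBall a (min r_D (r_I + R_p)) \ closedBall b R_I,
      SI ‖x - a‖ R_p r_I / (π * R_p ^ 2)))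

/-- Closed-form miss-detection probability of listen-before-talk (Proposition 2, eq. (7)). -/
noncomputable def pMD (a b : EuclideanSpace ℝ (Fin 2)) (μ R_p R_I r_I d r_D : ℝ) : ℝ :=
  (Real.exp (-μ * (π * r_D ^ 2)) -
    Real.exp (-μ * (π * (r_D ^ 2 + R_I ^ 2) - SI d r_D R_I +
      ∫ x in (closedBall a (r_I + R_p) \ closedBall b R_I) \
              (closedBall a (min r_D (r_I + R_p)) \ closedBall b R_I),
        SI ‖x - a‖ R_p r_I / (π * R_p ^ 2)))) /
  (1 - Real.exp (-μ * ((∫ x in closedBall a (r_I + R_p) \ closedBall b R_I,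
      SI ‖x - a‖ R_p r_I / (π * R_p ^ 2)) + π * R_I ^ 2)))

lemma vol2 (c : EuclideanSpace ℝ (Fin 2)) (r : ℝ) (hr : 0 ≤ r) :
    volume (closedBall c r) = ENNReal.ofReal (π * r ^ 2) := by
  rw [EuclideanSpace.volume_closedBall]
  rw [Fintype.card_fin]
  have : Real.Gamma ((2:ℕ) / 2 + 1) = 1 := by
    norm_num [Real.Gamma_two]
  rw [this, Real.sq_sqrt Real.pi_pos.le,
    ← ENNReal.ofReal_pow hr, ← ENNReal.ofReal_mul (by positivity)]
  ring_nf

lemma dist_single (d : ℝ) :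
    dist (EuclideanSpace.single (0 : Fin 2) d) (0 : EuclideanSpace ℝ (Fin 2)) = |d| := by
  rw [dist_zero_right, EuclideanSpace.norm_single, Real.norm_eq_abs]

lemma SI_eq_right (d r₁ r₂ : ℝ) (hd : 0 ≤ d) (hr₂ : 0 ≤ r₂) (h : d + r₂ ≤ r₁) :
    SI d r₁ r₂ = π * r₂ ^ 2 := by
  have hsub : closedBall (EuclideanSpace.single (0:Fin 2) d) r₂ ⊆
      closedBall (0 : EuclideanSpace ℝ (Fin 2)) r₁ :=
    closedBall_subset_closedBall' (by rw [dist_single, abs_of_nonneg hd]; linarith)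
  rw [SI, Set.inter_eq_right.mpr hsub, vol2 _ _ hr₂, ENNReal.toReal_ofReal (by positivity)]

lemma SI_eq_left (d r₁ r₂ : ℝ) (hd : 0 ≤ d) (hr₁ : 0 ≤ r₁) (h : r₁ + d ≤ r₂) :
    SI d r₁ r₂ = π * r₁ ^ 2 := by
  have hsub : closedBall (0 : EuclideanSpace ℝ (Fin 2)) r₁ ⊆
      closedBall (EuclideanSpace.single (0:Fin 2) d) r₂ :=
    closedBall_subset_closedBall'
      (by rw [dist_comm, dist_single, abs_of_nonneg hd]; linarith)
  rw [SI, Set.inter_eq_left.mpr hsub, vol2 _ _ hr₁, ENNReal.toReal_ofReal (by positivity)]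

lemma SI_nonneg (d r₁ r₂ : ℝ) : 0 ≤ SI d r₁ r₂ := ENNReal.toReal_nonneg

lemma aux_bound (μ RI2 rD2 J Q : ℝ) (hμ : 0 < μ) (hJ : 0 ≤ J) (hQ : 0 ≤ Q)
    (hRI2 : 0 < RI2) :
    0 ≤ (Real.exp (-μ * (π * rD2)) -
        Real.exp (-μ * (π * (rD2 + RI2) - π * RI2 + J))) /
      (1 - Real.exp (-μ * (Q + π * RI2))) ∧
    (Real.exp (-μ * (π * rD2)) -
        Real.exp (-μ * (π * (rD2 + RI2) - π * RI2 + J))) /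
      (1 - Real.exp (-μ * (Q + π * RI2))) ≤
      Real.exp (-μ * (π * rD2)) / (1 - Real.exp (-(μ * (π * RI2)))) := by
  have hπ := Real.pi_pos
  have hc : 0 < 1 - Real.exp (-(μ * (π * RI2))) := by
    have : Real.exp (-(μ * (π * RI2))) < 1 := by
      rw [Real.exp_lt_one_iff]
      have : 0 < μ * (π * RI2) := by positivity
      linarith
    linarith
  have hDge : 1 - Real.exp (-(μ * (π * RI2))) ≤ 1 - Real.exp (-μ * (Q + π * RI2)) := by
    have : Real.exp (-μ * (Q + π * RI2)) ≤ Real.exp (-(μ * (π * RI2))) :=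
      Real.exp_le_exp.mpr (by nlinarith)
    linarith
  have hN0 : 0 ≤ Real.exp (-μ * (π * rD2)) -
      Real.exp (-μ * (π * (rD2 + RI2) - π * RI2 + J)) := by
    have : Real.exp (-μ * (π * (rD2 + RI2) - π * RI2 + J)) ≤
        Real.exp (-μ * (π * rD2)) :=
      Real.exp_le_exp.mpr (by nlinarith)
    linarith
  have hN1 : Real.exp (-μ * (π * rD2)) -
      Real.exp (-μ * (π * (rD2 + RI2) - π * RI2 + J)) ≤
      Real.exp (-μ * (π * rD2)) := by
    have := Real.exp_pos (-μ * (π * (rD2 + RI2) - π * RI2 + J))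
    linarith
  exact ⟨div_nonneg hN0 (lt_of_lt_of_le hc hDge).le,
    div_le_div₀ (Real.exp_pos _).le hN1 hc hDge⟩

lemma key (R_I β γ μ : ℝ)
    (hRI : 0 < R_I) (hβ : β ∈ Set.Ioo (0:ℝ) 1) (hγ : γ ∈ Set.Ioo (0:ℝ) 1) (hμ : 0 < μ)
    (a b : EuclideanSpace ℝ (Fin 2)) (r : ℝ)
    (hd : dist a b = γ * r) (h1 : 2 * R_I < r) (h2 : 2 * R_I / (1 - γ) ≤ r) :
    pF a b μ (β * R_I) R_I r (γ * r) (r - R_I) = 0 ∧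
    0 ≤ pMD a b μ (β * R_I) R_I r (γ * r) (r - R_I) ∧
    pMD a b μ (β * R_I) R_I r (γ * r) (r - R_I) ≤
      Real.exp (-μ * (π * (r - R_I) ^ 2)) / (1 - Real.exp (-(μ * (π * R_I ^ 2)))) := by
  obtain ⟨hβ0, hβ1⟩ := hβ
  obtain ⟨hγ0, hγ1⟩ := hγ
  have hγ1' : (0:ℝ) < 1 - γ := by linarith
  have hr0 : 0 < r := by nlinarith
  have h2' : 2 * R_I ≤ r * (1 - γ) := by
    rw [div_le_iff₀ hγ1'] at h2; linarith
  have hcond : γ * r + R_I ≤ r - R_I := by nlinarith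
  have hRle : R_I ≤ r - R_I := by nlinarith
  have hRd0 : 0 ≤ r - R_I := by linarith
  have hmin : min (r - R_I) (r + β * R_I) = r - R_I :=
    min_eq_left (by nlinarith)
  have hSI : SI (γ * r) (r - R_I) R_I = π * R_I ^ 2 :=
    SI_eq_right _ _ _ (by positivity) hRI.le hcond
  have hdb : dist b a = γ * r := by rw [dist_comm]; exact hd
  have hsub : closedBall b R_I ⊆ closedBall a (r - R_I) :=
    closedBall_subset_closedBall' (by rw [hdb]; linarith)
  have hmeas : MeasurableSet (closedBall a (r - R_I) \ closedBall b R_I) :=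
    measurableSet_closedBall.diff measurableSet_closedBall
  have hgone : Set.EqOn (fun x => SI ‖x - a‖ (β * R_I) r / (π * (β * R_I) ^ 2)) 1
      (closedBall a (r - R_I) \ closedBall b R_I) := by
    intro x hx
    have hxa : ‖x - a‖ ≤ r - R_I := by
      have := hx.1
      rw [mem_closedBall, dist_eq_norm] at this
      exact this
    have : SI ‖x - a‖ (β * R_I) r = π * (β * R_I) ^ 2 :=
      SI_eq_left _ _ _ (norm_nonneg _) (by positivity) (by nlinarith)
    simp only [this, Pi.one_apply]
    exact div_self (by positivity)
  have hintSo : (∫ x in closedBall a (r - R_I) \ closedBall b R_I,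
      SI ‖x - a‖ (β * R_I) r / (π * (β * R_I) ^ 2)) =
      π * (r - R_I) ^ 2 - π * R_I ^ 2 := by
    rw [setIntegral_congr_fun hmeas hgone]
    simp only [Pi.one_apply]
    rw [setIntegral_const, smul_eq_mul, mul_one, Measure.real,
      measure_diff hsub measurableSet_closedBall.nullMeasurableSet
        measure_closedBall_lt_top.ne,
      vol2 _ _ hRd0, vol2 _ _ hRI.le,
      ← ENNReal.ofReal_sub _ (by positivity)]
    have hsq : R_I ^ 2 ≤ (r - R_I) ^ 2 := by nlinarith
    rw [ENNReal.toReal_ofReal (by nlinarith [Real.pi_pos])]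
  refine ⟨?_, ?_, ?_⟩
  · rw [pF, hmin, hSI, hintSo]
    have : π * (r - R_I) ^ 2 - π * R_I ^ 2 - (π * (r - R_I) ^ 2 - π * R_I ^ 2) = 0 := by
      ring
    rw [this, mul_zero, Real.exp_zero, sub_self]
  all_goals {
    rw [pMD, hmin, hSI]
    have hJ : 0 ≤ ∫ x in (closedBall a (r + β * R_I) \ closedBall b R_I) \
              (closedBall a (r - R_I) \ closedBall b R_I),
        SI ‖x - a‖ (β * R_I) r / (π * (β * R_I) ^ 2) :=
      integral_nonneg fun x => div_nonneg (SI_nonneg _ _ _) (by positivity)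
    have hQ : 0 ≤ ∫ x in closedBall a (r + β * R_I) \ closedBall b R_I,
        SI ‖x - a‖ (β * R_I) r / (π * (β * R_I) ^ 2) :=
      integral_nonneg fun x => div_nonneg (SI_nonneg _ _ _) (by positivity)
    first
    | exact (aux_bound μ (R_I ^ 2) ((r - R_I) ^ 2) _ _ hμ hJ hQ (by positivity)).1
    | exact (aux_bound μ (R_I ^ 2) ((r - R_I) ^ 2) _ _ hμ hJ hQ (by positivity)).2
  }

/-- Paper's Theorem 2, large-power regime: with `R_p = β R_I`, `d = γ r_I` and detection
range `r_D = r_I − R_I`, both `P_F → 0` and `P_MD → 0` as `r_I → ∞`. -/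
theorem lbt_perfect_detection_large_power (R_I β γ μ : ℝ)
    (hRI : 0 < R_I) (hβ : β ∈ Set.Ioo (0:ℝ) 1) (hγ : γ ∈ Set.Ioo (0:ℝ) 1) (hμ : 0 < μ)
    (a b : ℝ → EuclideanSpace ℝ (Fin 2))
    (hab : ∀ r_I : ℝ, 2 * R_I < r_I → dist (a r_I) (b r_I) = γ * r_I) :
    Tendsto (fun r_I : ℝ => pF (a r_I) (b r_I) μ (β * R_I) R_I r_I (γ * r_I) (r_I - R_I))
      atTop (nhds 0) ∧
    Tendsto (fun r_I : ℝ => pMD (a r_I) (b r_I) μ (β * R_I) R_I r_I (γ * r_I) (r_I - R_I))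
      atTop (nhds 0) := by
  have hkey : ∀ᶠ r : ℝ in atTop,
      pF (a r) (b r) μ (β * R_I) R_I r (γ * r) (r - R_I) = 0 ∧
      0 ≤ pMD (a r) (b r) μ (β * R_I) R_I r (γ * r) (r - R_I) ∧
      pMD (a r) (b r) μ (β * R_I) R_I r (γ * r) (r - R_I) ≤
        Real.exp (-μ * (π * (r - R_I) ^ 2)) / (1 - Real.exp (-(μ * (π * R_I ^ 2)))) := by
    filter_upwards [eventually_gt_atTop (2 * R_I), eventually_ge_atTop (2 * R_I / (1 - γ))]
      with r h1 h2
    exact key R_I β γ μ hRI hβ hγ hμ (a r) (b r) r (hab r h1) h1 h2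
  constructor
  · refine Tendsto.congr' ?_ (tendsto_const_nhds (α := ℝ) (x := (0:ℝ)))
    filter_upwards [hkey] with r h using h.1.symm
  · have hbound : Tendsto (fun r : ℝ =>
        Real.exp (-μ * (π * (r - R_I) ^ 2)) / (1 - Real.exp (-(μ * (π * R_I ^ 2)))))
        atTop (nhds 0) := by
      have h1 : Tendsto (fun r : ℝ => (r - R_I) ^ 2) atTop atTop := by
        have := (tendsto_pow_atTop (two_ne_zero)).comp
          (tendsto_atTop_add_const_right atTop (-R_I) tendsto_id)
        simpa [sub_eq_add_neg, Function.comp_def] using this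
      have h2 : Tendsto (fun r : ℝ => (μ * π) * (r - R_I) ^ 2) atTop atTop :=
        h1.const_mul_atTop (by positivity)
      have h3 : Tendsto (fun r : ℝ => -(μ * π * (r - R_I) ^ 2)) atTop atBot :=
        tendsto_neg_atTop_atBot.comp h2
      have hexp0 : Tendsto (fun r : ℝ => Real.exp (-(μ * π * (r - R_I) ^ 2)))
          atTop (nhds 0) := Real.tendsto_exp_atBot.comp h3
      have hexp : Tendsto (fun r : ℝ => Real.exp (-μ * (π * (r - R_I) ^ 2)))
          atTop (nhds 0) := hexp0.congr fun r => congrArg Real.exp (by ring)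
      simpa using hexp.div_const (1 - Real.exp (-(μ * (π * R_I ^ 2))))
    refine tendsto_of_tendsto_of_tendsto_of_le_of_le' tendsto_const_nhds hbound ?_ ?_
    · filter_upwards [hkey] with r h using h.2.1
    · filter_upwards [hkey] with r h using h.2.2
end
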